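/- Let x_1, ..., x_l be the values ω̄_ij(φ_1), ..., ω̄_ij(φ_l) of the combined estimator on l independent uniform spanning converging forests, and let x̄ = (1/l)Σx_k. For i ≠ j and ε, δ ∈ (0,1), if l ≥ (1/(2ε²) + 2/(3ε))·log(2/δ)/(2+d_j)², then with probability at least 1 − δ, |x̄ − ω_ij| ≤ ε. -/

import Mathlib

open Finset

/-- A spanning converging forest of the digraph with edge relation `E`,
encoded by its successor map `f : V → Option V` (`f i = some j` means edge `(i,j)`
is in the forest, `f i = none` means `i` is a root).  Acyclicity is expressed by a
height function that strictly decreases along edges. -/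
def IsSCF {V : Type*} (E : V → V → Prop) (f : V → Option V) : Prop :=
  (∀ i j, f i = some j → E i j) ∧ ∃ h : V → ℕ, ∀ i j, f i = some j → h j < h i

open scoped Classical in
/-- The set `F` of all spanning converging forests of the digraph `E`. -/
noncomputable def forests {V : Type*} [Fintype V] [DecidableEq V]
    (E : V → V → Prop) : Finset (V → Option V) :=
  Finset.univ.filter (IsSCF E)

/-- The root `r_φ(i)` of the tree containing node `i` in the forest `f`:
follow successors until reaching a root. -/
def rootOf {V : Type*} [Fintype V] (f : V → Option V) (i : V) : V :=
  (fun x => (f x).getD x)^[Fintype.card V] i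

/-- The combinatorial forest-matrix entry `ω_{ij} = |F_{ij}| / |F|`. -/
noncomputable def fOmega {V : Type*} [Fintype V] [DecidableEq V]
    (E : V → V → Prop) (i j : V) : ℝ :=
  (((forests E).filter (fun f => rootOf f i = j)).card : ℝ) / ((forests E).card : ℝ)

/-- Expectation of `g` under a uniformly random spanning converging forest. -/
noncomputable def expVal {V : Type*} [Fintype V] [DecidableEq V]
    (E : V → V → Prop) (g : (V → Option V) → ℝ) : ℝ :=
  (∑ f ∈ forests E, g f) / ((forests E).card : ℝ)

/-- Variance of `g` under a uniformly random spanning converging forest. -/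
noncomputable def varVal {V : Type*} [Fintype V] [DecidableEq V]
    (E : V → V → Prop) (g : (V → Option V) → ℝ) : ℝ :=
  expVal E (fun f => (g f - expVal E g) ^ 2)

/-- The indicator estimator `ω̂_{ij}(φ) = 1_{r_φ(i) = j}`. -/
noncomputable def indEst {V : Type*} [Fintype V] [DecidableEq V]
    (i j : V) (f : V → Option V) : ℝ :=
  if rootOf f i = j then 1 else 0

/-- Out-degree `d_i` of node `i`. -/
def outDeg {V : Type*} [Fintype V] (E : V → V → Prop) [DecidableRel E] (i : V) : ℕ :=
  (Finset.univ.filter (fun j => E i j)).card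

/-- In-neighbors `N⁻(j)` of node `j`. -/
def inNbrs {V : Type*} [Fintype V] (E : V → V → Prop) [DecidableRel E] (j : V) : Finset V :=
  Finset.univ.filter (fun k => E k j)

/-- The out-degree Laplacian `L = D - A`. -/
noncomputable def lap {V : Type*} [Fintype V] [DecidableEq V]
    (E : V → V → Prop) [DecidableRel E] : Matrix V V ℝ :=
  Matrix.of fun i j => (if i = j then (outDeg E i : ℝ) else 0) - (if E i j then (1 : ℝ) else 0)

/-- The forest matrix `Ω = (I + L)⁻¹`. -/
noncomputable def forestMatrix {V : Type*} [Fintype V] [DecidableEq V]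
    (E : V → V → Prop) [DecidableRel E] : Matrix V V ℝ :=
  (1 + lap E)⁻¹



set_option linter.unusedSectionVars false
set_option linter.unusedVariables false
set_option maxHeartbeats 1000000

namespace SCFAux

variable {V : Type*} [Fintype V] [DecidableEq V] {E : V → V → Prop} {f : V → Option V}

/-- one step of the chain -/
def st (f : V → Option V) (x : V) : V := (f x).getD x

lemma rootOf_def (f : V → Option V) (i : V) : rootOf f i = (st f)^[Fintype.card V] i := rfl

lemma st_none {x : V} (h : f x = none) : st f x = x := by simp [st, h]
lemma st_some {x y : V} (h : f x = some y) : st f x = y := by simp [st, h]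

lemma iterate_st_none {r : V} (h : f r = none) (n : ℕ) : (st f)^[n] r = r := by
  induction n with
  | zero => rfl
  | succ n ih => rw [Function.iterate_succ_apply, st_none h, ih]

lemma iterate_st_stable {x : V} {n m : ℕ} (h : f ((st f)^[n] x) = none) (hnm : n ≤ m) :
    (st f)^[m] x = (st f)^[n] x := by
  obtain ⟨k, rfl⟩ := Nat.exists_eq_add_of_le hnm
  rw [Nat.add_comm, Function.iterate_add_apply, iterate_st_none h]

section height
variable {h : V → ℕ} (hh : ∀ a b, f a = some b → h b < h a)
include hh

lemma height_st (x : V) : h (st f x) ≤ h x := by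
  cases hfx : f x with
  | none => rw [st_none hfx]
  | some y => rw [st_some hfx]; exact (hh _ _ hfx).le

lemma height_iterate (x : V) (n : ℕ) : h ((st f)^[n] x) ≤ h x := by
  induction n with
  | zero => exact le_rfl
  | succ n ih => rw [Function.iterate_succ_apply']; exact (height_st hh _).trans ih

end height

lemma exists_root (hf : IsSCF E f) (x : V) : ∃ n, f ((st f)^[n] x) = none := by
  obtain ⟨-, h, hh⟩ := hf
  obtain ⟨m, hm⟩ : ∃ m, h x ≤ m := ⟨h x, le_rfl⟩
  induction m generalizing x with
  | zero =>
    cases hfx : f x with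
    | none => exact ⟨0, hfx⟩
    | some y => exact absurd (hh _ _ hfx) (by omega)
  | succ m ih =>
    cases hfx : f x with
    | none => exact ⟨0, hfx⟩
    | some y =>
      obtain ⟨n, hn⟩ := ih y (by have := hh _ _ hfx; omega)
      exact ⟨n + 1, by rwa [Function.iterate_succ_apply, st_some hfx]⟩

/-- the root is reached within `card V` steps -/
lemma apply_rootOf' (hf : IsSCF E f) (x : V) : f (rootOf f x) = none := by
  classical
  have hex := exists_root hf x
  set n := Nat.find hex with hn
  have hroot : f ((st f)^[n] x) = none := Nat.find_spec hex
  have hlt : ∀ k, k < n → f ((st f)^[k] x) ≠ none := fun k hk => Nat.find_min hex hk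
  -- strict decrease of heights along the first n steps
  obtain ⟨-, h, hh⟩ := hf
  have hstrict : ∀ j k, j < k → k ≤ n → h ((st f)^[k] x) < h ((st f)^[j] x) := by
    intro j k hjk hkn
    induction k with
    | zero => omega
    | succ k ih =>
      have hstep : h ((st f)^[k+1] x) < h ((st f)^[k] x) := by
        cases hfk : f ((st f)^[k] x) with
        | none => exact absurd hfk (hlt k (by omega))
        | some y => rw [Function.iterate_succ_apply', st_some hfk]; exact hh _ _ hfk
      rcases Nat.lt_or_ge j k with hj | hj
      · exact hstep.trans (ih hj (by omega))
      · have : j = k := by omega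
        subst this; exact hstep
  have hinj : Function.Injective (fun k : Fin (n + 1) => (st f)^[(k : ℕ)] x) := by
    intro a b hab
    by_contra hne
    have hab' : h ((st f)^[(a:ℕ)] x) = h ((st f)^[(b:ℕ)] x) := by
      simpa using congrArg h hab
    rcases Ne.lt_or_gt (fun h : a = b => hne h) with hl | hl
    · have := hstrict a b hl (by omega); omega
    · have := hstrict b a hl (by omega); omega
  have hcard : n + 1 ≤ Fintype.card V := by
    simpa using Fintype.card_le_of_injective _ hinj
  have : rootOf f x = (st f)^[n] x := iterate_st_stable hroot (by omega)
  rw [this]; exact hroot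

def Reaches (f : V → Option V) (x y : V) : Prop := ∃ n, (st f)^[n] x = y

lemma reaches_rootOf (f : V → Option V) (x : V) : Reaches f x (rootOf f x) :=
  ⟨Fintype.card V, rfl⟩

lemma reaches_trans {x y z : V} (h1 : Reaches f x y) (h2 : Reaches f y z) : Reaches f x z := by
  obtain ⟨n, rfl⟩ := h1; obtain ⟨m, rfl⟩ := h2
  exact ⟨m + n, (Function.iterate_add_apply _ m n x)⟩

lemma rootOf_eq_of_reaches (hf : IsSCF E f) {x r : V} (hr : Reaches f x r)
    (hroot : f r = none) : rootOf f x = r := by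
  obtain ⟨n, hn⟩ := hr
  have h2 : f ((st f)^[Fintype.card V] x) = none := apply_rootOf' hf x
  rcases le_total n (Fintype.card V) with hle | hle
  · rw [rootOf_def, iterate_st_stable (hn ▸ hroot) hle, hn]
  · rw [← hn, iterate_st_stable h2 hle, rootOf_def]

lemma rootOf_eq_rootOf_of_reaches (hf : IsSCF E f) {x y : V} (hr : Reaches f x y) :
    rootOf f x = rootOf f y :=
  rootOf_eq_of_reaches hf (reaches_trans hr (reaches_rootOf f y)) (apply_rootOf' hf y)

lemma rootOf_of_none {x : V} (h : f x = none) : rootOf f x = x :=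
  iterate_st_none h _

lemma rootOf_st (hf : IsSCF E f) {x y : V} (hxy : f x = some y) : rootOf f y = rootOf f x :=
  (rootOf_eq_rootOf_of_reaches hf ⟨1, by simp [st_some hxy]⟩).symm

lemma apply_ne_none_of_rootOf_ne {x : V} (hf : IsSCF E f) (h : rootOf f x ≠ x) :
    f x ≠ none := fun hn => h (rootOf_of_none hn)

/-- no revisiting: the successor of `x` never reaches back to `x` -/
lemma not_reaches_of_some (hf : IsSCF E f) {x y : V} (hxy : f x = some y) :
    ¬ Reaches f y x := by
  obtain ⟨-, h, hh⟩ := hf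
  rintro ⟨n, hn⟩
  have := height_iterate hh y n
  rw [hn] at this
  exact absurd (hh _ _ hxy) (by omega)

section update
variable {i : V} {v : Option V}

lemma chain_update {x : V} {n : ℕ} (hx : ∀ k, k < n → (st f)^[k] x ≠ i) :
    (st (Function.update f i v))^[n] x = (st f)^[n] x := by
  induction n with
  | zero => rfl
  | succ n ih =>
    rw [Function.iterate_succ_apply', Function.iterate_succ_apply',
      ih (fun k hk => hx k (by omega))]
    have hne : (st f)^[n] x ≠ i := hx n (by omega)
    show ((Function.update f i v) _).getD _ = _
    rw [Function.update_of_ne hne]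
    rfl

lemma chain_update_of_not_reaches {x : V} (hx : ¬ Reaches f x i) (n : ℕ) :
    (st (Function.update f i v))^[n] x = (st f)^[n] x :=
  chain_update (fun k _ hk => hx ⟨k, hk⟩)

lemma reaches_update_iff {x y : V} (hx : ¬ Reaches f x i) :
    Reaches (Function.update f i v) x y ↔ Reaches f x y := by
  unfold Reaches
  constructor <;> rintro ⟨n, hn⟩ <;> exact ⟨n, by rw [← hn, chain_update_of_not_reaches hx]⟩

end update

end SCFAux

namespace SCFAux

variable {V : Type*} [Fintype V] [DecidableEq V] {E : V → V → Prop} {f : V → Option V}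

def Terminates (f : V → Option V) : Prop := ∀ x, ∃ n, f ((st f)^[n] x) = none

lemma isSCF_of_terminates (hE : ∀ a b, f a = some b → E a b) (ht : Terminates f) :
    IsSCF E f := by
  classical
  refine ⟨hE, fun x => Nat.find (ht x), fun a b hab => ?_⟩
  have hn : f ((st f)^[Nat.find (ht b)] b) = none := Nat.find_spec (ht b)
  have hne : Nat.find (ht a) ≠ 0 := by
    intro h0
    have := Nat.find_spec (ht a)
    rw [h0] at this
    simp only [Function.iterate_zero_apply] at this
    rw [this] at hab; exact absurd hab (by simp)
  have hstep : f ((st f)^[Nat.find (ht a) - 1] b) = none := by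
    have := Nat.find_spec (ht a)
    rwa [show Nat.find (ht a) = (Nat.find (ht a) - 1) + 1 by omega,
      Function.iterate_succ_apply, st_some hab] at this
  have := Nat.find_min' (ht b) hstep
  show Nat.find (ht b) < Nat.find (ht a)
  omega

section update
variable {i : V}

lemma terminates_of_isSCF (hf : IsSCF E f) : Terminates f := fun x => exists_root hf x

/-- removing the edge at `i` preserves the SCF property -/
lemma IsSCF_update_none (hf : IsSCF E f) : IsSCF E (Function.update f i none) := by
  classical
  apply isSCF_of_terminates
  · intro a b hab
    rcases eq_or_ne a i with rfl | hne
    · rw [Function.update_self] at hab; exact absurd hab (by simp)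
    · rw [Function.update_of_ne hne] at hab; exact hf.1 _ _ hab
  · intro x
    by_cases hreach : Reaches f x i
    · have hex : ∃ k, (st f)^[k] x = i := hreach
      refine ⟨Nat.find hex, ?_⟩
      rw [chain_update (fun k hk => Nat.find_min hex hk), Nat.find_spec hex,
        Function.update_self]
    · obtain ⟨n, hn⟩ := exists_root hf x
      refine ⟨n, ?_⟩
      rw [chain_update_of_not_reaches hreach,
        Function.update_of_ne (fun h => hreach ⟨n, h⟩)]
      exact hn

/-- redirecting `i` to `t` preserves the SCF property when `t` does not reach `i` -/
lemma IsSCF_update_some (hf : IsSCF E f) {t : V} (hEit : E i t) (hti : ¬ Reaches f t i) :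
    IsSCF E (Function.update f i (some t)) := by
  classical
  set g := Function.update f i (some t) with hg
  apply isSCF_of_terminates
  · intro a b hab
    rcases eq_or_ne a i with rfl | hne
    · rw [hg, Function.update_self] at hab
      cases hab; exact hEit
    · rw [hg, Function.update_of_ne hne] at hab; exact hf.1 _ _ hab
  · intro x
    -- from `t`, the g-chain equals the f-chain and terminates away from i
    obtain ⟨m, hm⟩ := exists_root hf t
    have hmi : (st f)^[m] t ≠ i := fun h => hti ⟨m, h⟩
    have htg : g ((st g)^[m] t) = none := by
      rw [hg, chain_update_of_not_reaches hti, Function.update_of_ne hmi]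
      exact hm
    by_cases hreach : Reaches f x i
    · have hex : ∃ k, (st f)^[k] x = i := hreach
      set k := Nat.find hex with hk
      have hgk : (st g)^[k] x = i := by
        rw [hg, chain_update (fun k2 hk2 => Nat.find_min hex hk2)]; exact Nat.find_spec hex
      refine ⟨m + (k + 1), ?_⟩
      have h1 : (st g)^[k+1] x = t := by
        rw [Function.iterate_succ_apply', hgk]
        show (g i).getD i = t
        rw [hg, Function.update_self]; rfl
      rw [Function.iterate_add_apply, h1]
      exact htg
    · obtain ⟨n, hn⟩ := exists_root hf x
      refine ⟨n, ?_⟩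
      rw [hg, chain_update_of_not_reaches hreach,
        Function.update_of_ne (fun h => hreach ⟨n, h⟩)]
      exact hn

lemma rootOf_update_of_not_reaches {v : Option V} (hg : IsSCF E (Function.update f i v))
    (hf : IsSCF E f) {x : V} (hx : ¬ Reaches f x i) :
    rootOf (Function.update f i v) x = rootOf f x := by
  apply rootOf_eq_of_reaches hg
  · exact ⟨Fintype.card V, chain_update_of_not_reaches hx _⟩
  · have : rootOf f x ≠ i := fun h => hx (h ▸ reaches_rootOf f x)
    rw [Function.update_of_ne this]
    exact apply_rootOf' hf x

end update

end SCFAux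

namespace SCFAux

open Finset
open scoped Classical

variable {V : Type*} [Fintype V] [DecidableEq V] (E : V → V → Prop)

lemma mem_forests {f : V → Option V} : f ∈ forests E ↔ IsSCF E f := by
  simp [forests]

/-- `F_{ab}`: forests in which the root of `a` is `b` -/
noncomputable def Fij (a b : V) : Finset (V → Option V) :=
  (forests E).filter (fun f => rootOf f a = b)

lemma mem_Fij {a b : V} {f : V → Option V} :
    f ∈ Fij E a b ↔ IsSCF E f ∧ rootOf f a = b := by
  simp [Fij, mem_forests]

variable [DecidableRel E]

/-- index set: `none` together with the out-neighbours of `i` -/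
noncomputable def Copt (i : V) : Finset (Option V) :=
  insert none ((Finset.univ.filter (fun t => E i t)).image some)

lemma mem_Copt {i : V} {c : Option V} :
    c ∈ Copt E i ↔ c = none ∨ ∃ t, c = some t ∧ E i t := by
  simp [Copt]; tauto

lemma card_Copt (i : V) : (Copt E i).card = 1 + outDeg E i := by
  rw [Copt, card_insert_of_notMem (by simp), card_image_of_injective _ (Option.some_injective V)]
  rw [outDeg]; omega

variable {E}

section bij

variable (hER : DecidableRel E)

/-- forward map for both bijections -/
noncomputable def phi (i : V) (a : (V → Option V) × Option V) : (V → Option V) × V :=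
  if ∃ t, a.2 = some t ∧ Reaches a.1 t i then (a.1, a.2.getD ((a.1 i).getD i))
  else (Function.update a.1 i a.2, (a.1 i).getD i)

/-- reverse map for bijection R1 -/
noncomputable def psi (i : V) (b : (V → Option V) × V) : (V → Option V) × Option V :=
  if Reaches b.1 b.2 i then (b.1, some b.2) else (Function.update b.1 i (some b.2), b.1 i)

end bij

/-- Row identity, off-diagonal case. -/
lemma card_R1 (hEirr : ∀ a, ¬ E a a) {i j : V} (hij : i ≠ j) :
    (Fij E i j).card * (1 + outDeg E i) =
    (((forests E) ×ˢ (Finset.univ : Finset V)).filter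
        (fun q => E i q.2 ∧ rootOf q.1 q.2 = j)).card := by
  classical
  rw [← card_Copt E i, ← card_product]
  apply Finset.card_bij' (fun a _ => phi i a) (fun b _ => psi i b)
  · -- phi maps into target
    rintro ⟨g, c⟩ ha
    rw [mem_product, mem_Fij, mem_Copt] at ha
    obtain ⟨⟨hg, hroot⟩, hc⟩ := ha
    have hgi : g i = some ((g i).getD i) := by
      cases hgiv : g i with
      | none => exact absurd (by rw [← rootOf_of_none hgiv, hroot] : i = j) hij
      | some m => rfl
    have hm0 : ¬ Reaches g ((g i).getD i) i := not_reaches_of_some hg hgi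
    have hrm0 : rootOf g ((g i).getD i) = j := (rootOf_st hg hgi).trans hroot
    simp only [mem_filter, mem_product, mem_univ, and_true, mem_forests, phi]
    split_ifs with hcond
    · obtain ⟨t, rfl, hti⟩ := hcond
      refine ⟨hg, ?_, ?_⟩
      · rcases hc with h | ⟨t', ht', hEt⟩
        · exact absurd h (Option.some_ne_none t)
        · simpa [Option.some_inj.mp ht'] using hEt
      · simp only [Option.getD_some]
        exact (rootOf_eq_rootOf_of_reaches hg hti).trans hroot
    · have hSCF : IsSCF E (Function.update g i c) := by
        rcases hc with rfl | ⟨t, rfl, hEt⟩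
        · exact IsSCF_update_none hg
        · exact IsSCF_update_some hg hEt (fun hr => hcond ⟨t, rfl, hr⟩)
      refine ⟨hSCF, hg.1 i _ hgi, ?_⟩
      rw [rootOf_update_of_not_reaches hSCF hg hm0]
      exact hrm0
  · -- psi maps into source
    rintro ⟨f, m⟩ hb
    simp only [mem_filter, mem_product, mem_univ, and_true, mem_forests] at hb
    obtain ⟨hf, hEim, hrm⟩ := hb
    simp only [psi, mem_product, mem_Fij, mem_Copt]
    split_ifs with hcond
    · refine ⟨⟨hf, ?_⟩, Or.inr ⟨m, rfl, hEim⟩⟩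
      exact (rootOf_eq_rootOf_of_reaches hf hcond).symm.trans hrm
    · have hSCF : IsSCF E (Function.update f i (some m)) := IsSCF_update_some hf hEim hcond
      refine ⟨⟨hSCF, ?_⟩, ?_⟩
      · have h1 : Function.update f i (some m) i = some m := Function.update_self ..
        rw [← rootOf_st hSCF h1, rootOf_update_of_not_reaches hSCF hf hcond]
        exact hrm
      · cases hfi : f i with
        | none => exact Or.inl rfl
        | some t => exact Or.inr ⟨t, rfl, hf.1 i t hfi⟩
  · -- left inverse
    rintro ⟨g, c⟩ ha
    rw [mem_product, mem_Fij, mem_Copt] at ha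
    obtain ⟨⟨hg, hroot⟩, hc⟩ := ha
    have hgi : g i = some ((g i).getD i) := by
      cases hgiv : g i with
      | none => exact absurd (by rw [← rootOf_of_none hgiv, hroot] : i = j) hij
      | some m => rfl
    have hm0 : ¬ Reaches g ((g i).getD i) i := not_reaches_of_some hg hgi
    simp only [phi]
    split_ifs with hcond
    · obtain ⟨t, rfl, hti⟩ := hcond
      simp only [Option.getD_some, psi]
      rw [if_pos hti]
    · simp only [psi]
      rw [if_neg]
      · have h1 : Function.update g i c i = c := Function.update_self ..
        rw [h1, Function.update_idem, ← hgi, Function.update_eq_self]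
      · rw [reaches_update_iff hm0]
        exact hm0
  · -- right inverse
    rintro ⟨f, m⟩ hb
    simp only [mem_filter, mem_product, mem_univ, and_true, mem_forests] at hb
    obtain ⟨hf, hEim, hrm⟩ := hb
    simp only [psi]
    split_ifs with hcond
    · simp only [phi]
      rw [if_pos ⟨m, rfl, hcond⟩]
      simp
    · simp only [phi]
      have hupdi : Function.update f i (some m) i = some m := Function.update_self ..
      rw [if_neg]
      · simp only [hupdi, Option.getD_some, Function.update_idem]
        cases hfi : f i with
        | none => rw [← hfi, Function.update_eq_self]
        | some t => rw [← hfi, Function.update_eq_self]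
      · rintro ⟨t, hfit, htr⟩
        have hft : f i = some t := hfit
        have h2 : ¬ Reaches f t i := not_reaches_of_some hf hft
        rw [reaches_update_iff h2] at htr
        exact h2 htr

/-- forward map for the diagonal bijection -/
noncomputable def phi2 (i : V) (a : (V → Option V) × Option V) : (V → Option V) × Option V :=
  if ∃ t, a.2 = some t ∧ Reaches a.1 t i then (a.1, a.2)
  else (Function.update a.1 i a.2, none)

/-- reverse map for the diagonal bijection -/
noncomputable def psi2 (i : V) (b : (V → Option V) × Option V) : (V → Option V) × Option V :=
  if ∃ m, b.2 = some m then (b.1, b.2) else (Function.update b.1 i none, b.1 i)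

/-- Row identity, diagonal case. -/
lemma card_R2 (hEirr : ∀ a, ¬ E a a) (i : V) :
    (Fij E i i).card * (1 + outDeg E i) =
    (forests E).card +
    (((forests E) ×ˢ (Finset.univ : Finset V)).filter
        (fun q => E i q.2 ∧ rootOf q.1 q.2 = i)).card := by
  classical
  set S2 := (((forests E) ×ˢ (Finset.univ : Finset V)).filter
      (fun q => E i q.2 ∧ rootOf q.1 q.2 = i)) with hS2
  set T := ((forests E) ×ˢ ({none} : Finset (Option V))) ∪
      (S2.image (fun q => (q.1, some q.2))) with hT
  have hmemT : ∀ (f : V → Option V) (c : Option V), (f, c) ∈ T ↔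
      (c = none ∧ IsSCF E f) ∨
      (∃ m, c = some m ∧ IsSCF E f ∧ E i m ∧ rootOf f m = i) := by
    intro f c
    simp only [hT, mem_union, mem_product, mem_singleton, mem_image, hS2, mem_filter,
      mem_univ, and_true, Prod.mk.injEq, mem_forests]
    constructor
    · rintro (⟨h1, h2⟩ | ⟨⟨f', m⟩, ⟨⟨hf', hEm, hr⟩, hq1, hq2⟩⟩)
      · exact Or.inl ⟨h2, h1⟩
      · exact Or.inr ⟨m, hq2.symm, hq1 ▸ hf', hEm, hq1 ▸ hr⟩
    · rintro (⟨h1, h2⟩ | ⟨m, hc, hf, hEm, hr⟩)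
      · exact Or.inl ⟨h2, h1⟩
      · exact Or.inr ⟨⟨f, m⟩, ⟨⟨hf, hEm, hr⟩, rfl, hc.symm⟩⟩
  have hcardT : T.card = (forests E).card + S2.card := by
    rw [hT, Finset.card_union_of_disjoint, Finset.card_product, Finset.card_singleton,
      mul_one, Finset.card_image_of_injective]
    · intro a b hab
      simp only [Prod.ext_iff] at hab ⊢
      exact ⟨hab.1, Option.some_inj.mp hab.2⟩
    · rw [Finset.disjoint_left]
      rintro ⟨f, c⟩ h1 h2
      simp only [mem_product, mem_singleton] at h1
      simp only [mem_image, Prod.mk.injEq] at h2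
      obtain ⟨q, _, _, hc⟩ := h2
      rw [← hc] at h1
      exact absurd h1.2 (by simp)
  rw [← card_Copt E i, ← card_product, ← hcardT]
  apply Finset.card_bij' (fun a _ => phi2 i a) (fun b _ => psi2 i b)
  · -- phi2 maps into T
    rintro ⟨g, c⟩ ha
    rw [mem_product, mem_Fij, mem_Copt] at ha
    obtain ⟨⟨hg, hroot⟩, hc⟩ := ha
    dsimp only at hg hroot hc
    have hgi : g i = none := by
      have := apply_rootOf' hg i
      rwa [hroot] at this
    simp only [phi2]
    split_ifs with hcond
    · obtain ⟨t, hct, hti⟩ := hcond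
      rw [hmemT]
      refine Or.inr ⟨t, hct, hg, ?_, ?_⟩
      · rcases hc with h | ⟨t', ht', hEt⟩
        · rw [h] at hct; exact absurd hct (by simp)
        · rwa [show t = t' from Option.some_inj.mp (hct ▸ ht')]
      · exact rootOf_eq_of_reaches hg hti hgi
    · rw [hmemT]
      refine Or.inl ⟨rfl, ?_⟩
      rcases hc with rfl | ⟨t, rfl, hEt⟩
      · exact IsSCF_update_none hg
      · exact IsSCF_update_some hg hEt (fun hr => hcond ⟨t, rfl, hr⟩)
  · -- psi2 maps into source
    rintro ⟨f, c⟩ hb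
    rw [hmemT] at hb
    simp only [psi2]
    rcases hb with ⟨rfl, hf⟩ | ⟨m, rfl, hf, hEm, hr⟩
    · rw [if_neg (by rintro ⟨m, hm⟩; exact absurd hm (by simp))]
      rw [mem_product, mem_Fij, mem_Copt]
      have hSCF : IsSCF E (Function.update f i none) := IsSCF_update_none hf
      refine ⟨⟨hSCF, rootOf_of_none (Function.update_self ..)⟩, ?_⟩
      cases hfi : f i with
      | none => exact Or.inl rfl
      | some t => exact Or.inr ⟨t, rfl, hf.1 i t hfi⟩
    · rw [if_pos ⟨m, rfl⟩]
      rw [mem_product, mem_Fij, mem_Copt]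
      have hfi : f i = none := by
        have := apply_rootOf' hf m
        rwa [hr] at this
      exact ⟨⟨hf, rootOf_of_none hfi⟩, Or.inr ⟨m, rfl, hEm⟩⟩
  · -- left inverse
    rintro ⟨g, c⟩ ha
    rw [mem_product, mem_Fij, mem_Copt] at ha
    obtain ⟨⟨hg, hroot⟩, hc⟩ := ha
    dsimp only at hg hroot hc
    have hgi : g i = none := by
      have := apply_rootOf' hg i
      rwa [hroot] at this
    simp only [phi2]
    split_ifs with hcond
    · obtain ⟨t, hct, hti⟩ := hcond
      simp only [psi2]
      rw [if_pos ⟨t, hct⟩]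
    · simp only [psi2]
      rw [if_neg (by rintro ⟨m, hm⟩; exact absurd hm (by simp))]
      have h1 : Function.update g i c i = c := Function.update_self ..
      have h2 : Function.update g i none = g := by
        rw [← hgi]; exact Function.update_eq_self i g
      rw [h1, Function.update_idem, ← hgi]
      rw [Function.update_eq_self]
  · -- right inverse
    rintro ⟨f, c⟩ hb
    rw [hmemT] at hb
    simp only [psi2]
    rcases hb with ⟨rfl, hf⟩ | ⟨m, rfl, hf, hEm, hr⟩
    · rw [if_neg (by rintro ⟨m, hm⟩; exact absurd hm (by simp))]
      simp only [phi2]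
      cases hfi : f i with
      | none =>
        rw [if_neg (by rintro ⟨t, ht, -⟩; exact absurd ht (by simp))]
        have h2 : Function.update f i none = f := by
          rw [← hfi]; exact Function.update_eq_self i f
        rw [Function.update_idem, h2]
      | some t =>
        have h2 : ¬ Reaches f t i := not_reaches_of_some hf hfi
        have h3 : ¬ Reaches (Function.update f i none) t i := by
          rw [reaches_update_iff h2]; exact h2
        have hne : ¬ ∃ t', (some t : Option V) = some t' ∧
            Reaches (Function.update f i none) t' i := by
          rintro ⟨t', ht', hrt'⟩
          exact h3 (by rwa [Option.some_inj.mp ht'.symm] at hrt')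
        rw [if_neg hne]
        have h4 : Function.update f i (some t) = f := by
          rw [← hfi]; exact Function.update_eq_self i f
        rw [Function.update_idem, h4]
    · rw [if_pos ⟨m, rfl⟩]
      simp only [phi2]
      rw [if_pos ⟨m, rfl, hr ▸ reaches_rootOf f m⟩]

end SCFAux

namespace SCFAux

open Finset
open scoped Classical

variable {V : Type*} [Fintype V] [DecidableEq V] {E : V → V → Prop} [DecidableRel E]

lemma card_S2_sum (i j : V) :
    (((forests E) ×ˢ (Finset.univ : Finset V)).filter
        (fun q => E i q.2 ∧ rootOf q.1 q.2 = j)).card =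
    ∑ m ∈ Finset.univ.filter (fun m => E i m), (Fij E m j).card := by
  rw [Finset.card_filter, Finset.sum_product, Finset.sum_comm, Finset.sum_filter]
  apply Finset.sum_congr rfl
  intro m _
  by_cases h : E i m
  · simp only [h, true_and, if_true, Fij, Finset.card_filter]
  · simp [h]

lemma forests_nonempty : 0 < (forests E).card := by
  rw [Finset.card_pos]
  refine ⟨fun _ => none, (mem_forests E).mpr ⟨fun a b hab => absurd hab (by simp),
    fun _ => 0, fun a b hab => absurd hab (by simp)⟩⟩

/-- the row identity in matrix form -/
lemma row_matrix (hEirr : ∀ a, ¬ E a a) :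
    ((1 : Matrix V V ℝ) + lap E) * (Matrix.of fun a b => ((Fij E a b).card : ℝ)) =
      (((forests E).card : ℝ)) • (1 : Matrix V V ℝ) := by
  ext i j
  have hone : ∀ k : V, ((1 : Matrix V V ℝ) + lap E) i k =
      (if i = k then (1 + (outDeg E i : ℝ)) else 0) - (if E i k then (1:ℝ) else 0) := by
    intro k
    by_cases h : i = k <;>
      simp [Matrix.add_apply, Matrix.one_apply, lap, h] <;> ring
  rw [Matrix.mul_apply]
  simp only [hone, sub_mul, Matrix.of_apply]
  rw [Finset.sum_sub_distrib]
  have h1 : ∑ k, (if i = k then (1 + (outDeg E i : ℝ)) else 0) * ((Fij E k j).card : ℝ)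
      = (1 + (outDeg E i : ℝ)) * ((Fij E i j).card : ℝ) := by
    simp only [ite_mul, zero_mul]
    rw [Finset.sum_ite_eq]
    simp
  have h2 : ∑ k, (if E i k then (1:ℝ) else 0) * ((Fij E k j).card : ℝ)
      = ∑ k ∈ Finset.univ.filter (fun k => E i k), ((Fij E k j).card : ℝ) := by
    rw [Finset.sum_filter]
    exact (Finset.sum_congr rfl (fun k _ => by by_cases h : E i k <;> simp [h])).symm
  rw [h1, h2]
  rcases eq_or_ne i j with rfl | hij
  · have := card_R2 hEirr i  -- wrong arg order fix later
    rw [card_S2_sum] at this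
    have hcast := congrArg (fun n : ℕ => (n : ℝ)) this
    push_cast at hcast
    simp only [Matrix.smul_apply, Matrix.one_apply_eq, smul_eq_mul, mul_one]
    push_cast
    rw [mul_comm] at hcast
    linarith
  · have := card_R1 hEirr hij
    rw [card_S2_sum] at this
    have hcast := congrArg (fun n : ℕ => (n : ℝ)) this
    push_cast at hcast
    simp only [Matrix.smul_apply, Matrix.one_apply_ne hij, smul_eq_mul, mul_zero]
    rw [mul_comm] at hcast
    linarith

/-- the column identity: `(1 + d_j)·|F_ij| = ∑_{k∈N⁻(j)} |F_ik|` for `i ≠ j` -/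
lemma key_col (hEirr : ∀ a, ¬ E a a) {i j : V} (hij : i ≠ j) :
    (1 + (outDeg E j : ℝ)) * ((Fij E i j).card : ℝ) =
    ∑ k ∈ Finset.univ.filter (fun k => E k j), ((Fij E i k).card : ℝ) := by
  set W : Matrix V V ℝ := Matrix.of fun a b => ((Fij E a b).card : ℝ) with hW
  set N : ℝ := ((forests E).card : ℝ) with hNdef
  have hN : N ≠ 0 := by
    rw [hNdef]
    exact_mod_cast forests_nonempty.ne'
  have hrow := row_matrix (E := E) hEirr
  have hinv : ((1 : Matrix V V ℝ) + lap E) * (N⁻¹ • W) = 1 := by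
    rw [Matrix.mul_smul, hrow, smul_smul, inv_mul_cancel₀ hN, one_smul]
  have hcomm := mul_eq_one_comm.mp hinv
  have hWA : W * ((1 : Matrix V V ℝ) + lap E) = N • 1 := by
    have := congrArg (fun M => (N : ℝ) • M) hcomm
    simp only [smul_smul, mul_inv_cancel₀ hN, one_smul, Matrix.smul_mul] at this
    rw [this]
  have hentry : ∑ k, W i k * (((1 : Matrix V V ℝ) + lap E) k j) = 0 := by
    have h0 := congrFun (congrFun hWA i) j
    rw [show (W * ((1 : Matrix V V ℝ) + lap E)) i j = ∑ k, W i k * (((1 : Matrix V V ℝ) + lap E) k j) from Matrix.mul_apply] at h0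
    rw [h0]
    simp [Matrix.smul_apply, Matrix.one_apply_ne hij]
  have hone : ∀ k : V, ((1 : Matrix V V ℝ) + lap E) k j =
      (if k = j then (1 + (outDeg E k : ℝ)) else 0) - (if E k j then (1:ℝ) else 0) := by
    intro k
    by_cases h : k = j <;>
      simp [Matrix.add_apply, Matrix.one_apply, lap, h] <;> ring
  simp only [hone, mul_sub] at hentry
  rw [Finset.sum_sub_distrib] at hentry
  have h1 : ∑ k, W i k * (if k = j then (1 + (outDeg E k : ℝ)) else 0)
      = ((Fij E i j).card : ℝ) * (1 + (outDeg E j : ℝ)) := by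
    simp only [mul_ite, mul_zero]
    rw [Finset.sum_ite_eq']
    simp [hW]
  have h2 : ∑ k, W i k * (if E k j then (1:ℝ) else 0)
      = ∑ k ∈ Finset.univ.filter (fun k => E k j), ((Fij E i k).card : ℝ) := by
    rw [Finset.sum_filter]
    apply Finset.sum_congr rfl
    intro k _
    by_cases h : E k j <;> simp [h, hW]
  rw [h1, h2] at hentry
  linarith

end SCFAux

namespace SCFAux

open Real

/-- Hoeffding's lemma for a Bernoulli variable. -/
lemma hoeffding_scalar {p : ℝ} (hp0 : 0 ≤ p) (hp1 : p ≤ 1) (t : ℝ) :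
    (1 - p) + p * Real.exp t ≤ Real.exp (t * p + t ^ 2 / 8) := by
  rcases eq_or_lt_of_le hp0 with h0 | h0
  · rw [← h0]
    simpa using Real.one_le_exp (by positivity)
  rcases eq_or_lt_of_le hp1 with h1 | h1
  · rw [h1]
    simpa using Real.exp_le_exp.mpr (by nlinarith [sq_nonneg t] : t ≤ t * 1 + t ^ 2 / 8)
  obtain ⟨c, hc⟩ : ∃ c : ℝ, c = 1 - p := ⟨_, rfl⟩
  have hcpos : 0 < c := by rw [hc]; linarith
  have hq : ∀ s : ℝ, 0 < c + p * Real.exp s := fun s => by positivity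
  set f : ℝ → ℝ := fun s => s * p + s ^ 2 / 8 - Real.log (c + p * Real.exp s) with hf
  set f' : ℝ → ℝ := fun s => p + s / 4 - p * Real.exp s / (c + p * Real.exp s) with hf'
  set f'' : ℝ → ℝ := fun s =>
      1 / 4 - c * (p * Real.exp s) / (c + p * Real.exp s) ^ 2 with hf''
  have hq' : ∀ s : ℝ, HasDerivAt (fun u => c + p * Real.exp u) (p * Real.exp s) s := by
    intro s
    simpa using ((Real.hasDerivAt_exp s).const_mul p).const_add c
  have hder1 : ∀ s : ℝ, HasDerivAt f (f' s) s := by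
    intro s
    have h1 : HasDerivAt (fun u : ℝ => u * p) p s := by
      simpa using (hasDerivAt_id s).mul_const p
    have h2 : HasDerivAt (fun u : ℝ => u ^ 2 / 8) (s / 4) s := by
      have := (hasDerivAt_pow 2 s).div_const 8
      simpa using this.congr_deriv (by ring)
    have h3 : HasDerivAt (fun u : ℝ => Real.log (c + p * Real.exp u))
        (p * Real.exp s / (c + p * Real.exp s)) s :=
      (hq' s).log (hq s).ne'
    exact ((h1.add h2).sub h3)
  have hder2 : ∀ s : ℝ, HasDerivAt f' (f'' s) s := by
    intro s
    have h1 : HasDerivAt (fun u : ℝ => p + u / 4) (1 / 4) s := by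
      simpa using ((hasDerivAt_id s).div_const 4).const_add p
    have h2 : HasDerivAt (fun u : ℝ => p * Real.exp u / (c + p * Real.exp u))
        (c * (p * Real.exp s) / (c + p * Real.exp s) ^ 2) s := by
      have := ((Real.hasDerivAt_exp s).const_mul p).div (hq' s) (hq s).ne'
      refine this.congr_deriv ?_
      field_simp
      ring
    exact h1.sub h2
  have hf''nonneg : ∀ s : ℝ, 0 ≤ f'' s := by
    intro s
    have he : 0 < Real.exp s := Real.exp_pos s
    have hpos : 0 < (c + p * Real.exp s) ^ 2 := by positivity
    have hle : c * (p * Real.exp s) / (c + p * Real.exp s) ^ 2 ≤ 1 / 4 := by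
      rw [div_le_iff₀ hpos]
      nlinarith [sq_nonneg (c - p * Real.exp s), mul_pos hcpos (mul_pos h0 he)]
    simp only [hf'']
    linarith
  have hdiff1 : Differentiable ℝ f := fun s => (hder1 s).differentiableAt
  have hmono : Monotone f' := by
    apply monotone_of_deriv_nonneg (fun s => (hder2 s).differentiableAt)
    intro s
    rw [(hder2 s).deriv]
    exact hf''nonneg s
  have hf'0 : f' 0 = 0 := by
    simp only [hf']
    rw [Real.exp_zero]
    rw [show c + p * 1 = 1 by rw [hc]; ring]
    norm_num
  have hf0 : f 0 = 0 := by
    simp only [hf]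
    rw [Real.exp_zero, show c + p * 1 = 1 by rw [hc]; ring, Real.log_one]
    norm_num
  have hft : 0 ≤ f t := by
    rcases le_total 0 t with ht | ht
    · have hmon : MonotoneOn f (Set.Icc 0 t) := by
        apply monotoneOn_of_deriv_nonneg (convex_Icc 0 t)
          hdiff1.continuous.continuousOn
          (hdiff1.differentiableOn)
        intro s hs
        rw [(hder1 s).deriv]
        have : (0:ℝ) ≤ s := (Set.mem_Icc.mp (interior_subset hs)).1
        calc (0:ℝ) = f' 0 := hf'0.symm
          _ ≤ f' s := hmono this
      have := hmon (Set.mem_Icc.mpr ⟨le_rfl, ht⟩) (Set.mem_Icc.mpr ⟨ht, le_rfl⟩) ht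
      linarith [hf0 ▸ this]
    · have hant : AntitoneOn f (Set.Icc t 0) := by
        apply antitoneOn_of_deriv_nonpos (convex_Icc t 0)
          hdiff1.continuous.continuousOn
          (hdiff1.differentiableOn)
        intro s hs
        rw [(hder1 s).deriv]
        have : s ≤ (0:ℝ) := (Set.mem_Icc.mp (interior_subset hs)).2
        calc f' s ≤ f' 0 := hmono this
          _ = 0 := hf'0
      have := hant (Set.mem_Icc.mpr ⟨le_rfl, ht⟩) (Set.mem_Icc.mpr ⟨ht, le_rfl⟩) ht
      linarith [hf0 ▸ this]
  have hlog : Real.log (c + p * Real.exp t) ≤ t * p + t ^ 2 / 8 := by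
    simp only [hf] at hft
    linarith
  calc (1 - p) + p * Real.exp t = c + p * Real.exp t := by rw [hc]
    _ ≤ Real.exp (t * p + t ^ 2 / 8) := by
        rw [← Real.exp_log (hq t)]
        exact Real.exp_le_exp.mpr hlog

end SCFAux

namespace SCFAux

open Finset

/-- Chernoff counting bound: the number of tuples satisfying `P` is controlled by the mgf. -/
lemma chernoff_count {α : Type*} [DecidableEq α] (s : Finset α) (Z : α → ℝ) (l : ℕ)
    (t a : ℝ) (P : (Fin l → α) → Prop) [DecidablePred P]
    (hP : ∀ φ, P φ → t * a ≤ t * ∑ k, Z (φ k)) :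
    (((Fintype.piFinset (fun _ : Fin l => s)).filter P).card : ℝ)
      ≤ Real.exp (- (t * a)) * (∑ f ∈ s, Real.exp (t * Z f)) ^ l := by
  have h1 : (((Fintype.piFinset (fun _ : Fin l => s)).filter P).card : ℝ)
      ≤ ∑ φ ∈ (Fintype.piFinset (fun _ : Fin l => s)).filter P,
          Real.exp (t * (∑ k, Z (φ k)) - t * a) := by
    rw [Finset.card_eq_sum_ones, Nat.cast_sum]
    apply Finset.sum_le_sum
    intro φ hφ
    rw [Finset.mem_filter] at hφ
    have := hP φ hφ.2
    have h0 : (0:ℝ) ≤ t * (∑ k, Z (φ k)) - t * a := by linarith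
    simpa using Real.one_le_exp h0
  have h2 : ∑ φ ∈ (Fintype.piFinset (fun _ : Fin l => s)).filter P,
        Real.exp (t * (∑ k, Z (φ k)) - t * a)
      ≤ ∑ φ ∈ Fintype.piFinset (fun _ : Fin l => s),
          Real.exp (t * (∑ k, Z (φ k)) - t * a) :=
    Finset.sum_le_sum_of_subset_of_nonneg (Finset.filter_subset _ _)
      (fun _ _ _ => (Real.exp_pos _).le)
  have h3 : ∑ φ ∈ Fintype.piFinset (fun _ : Fin l => s),
        Real.exp (t * (∑ k, Z (φ k)) - t * a)
      = Real.exp (- (t * a)) * ∑ φ ∈ Fintype.piFinset (fun _ : Fin l => s),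
          ∏ k, Real.exp (t * Z (φ k)) := by
    rw [Finset.mul_sum]
    apply Finset.sum_congr rfl
    intro φ _
    rw [← Real.exp_sum, ← Real.exp_add, Finset.mul_sum]
    ring_nf
  have h4 : ∑ φ ∈ Fintype.piFinset (fun _ : Fin l => s), ∏ k, Real.exp (t * Z (φ k))
      = (∑ f ∈ s, Real.exp (t * Z f)) ^ l := by
    rw [← Finset.prod_univ_sum (t := fun _ : Fin l => s) (f := fun _ g => Real.exp (t * Z g))]
    simp
  calc (((Fintype.piFinset (fun _ : Fin l => s)).filter P).card : ℝ)
      ≤ _ := h1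
    _ ≤ _ := h2
    _ = _ := by rw [h3, h4]

lemma sum_exp_indicator {α : Type*} (s : Finset α) (pr : α → Prop) [DecidablePred pr] (t : ℝ) :
    ∑ f ∈ s, Real.exp (t * (if pr f then (1:ℝ) else 0))
      = ((s.filter pr).card : ℝ) * Real.exp t
        + ((s.filter (fun f => ¬ pr f)).card : ℝ) := by
  rw [← Finset.sum_filter_add_sum_filter_not s pr]
  congr 1
  · rw [Finset.sum_congr rfl (fun f hf => by
      rw [if_pos (Finset.mem_filter.mp hf).2, mul_one]), Finset.sum_const]
    simp [mul_comm]
  · rw [Finset.sum_congr rfl (fun f hf => by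
      rw [if_neg (Finset.mem_filter.mp hf).2, mul_zero, Real.exp_zero]), Finset.sum_const]
    simp

/-- the indicator mgf bound -/
lemma indicator_mgf_bound {α : Type*} (s : Finset α) (pr : α → Prop) [DecidablePred pr]
    (hN : 0 < s.card) (t : ℝ) :
    ∑ f ∈ s, Real.exp (t * (if pr f then (1:ℝ) else 0))
      ≤ (s.card : ℝ) * Real.exp (t * (((s.filter pr).card : ℝ) / (s.card : ℝ)) + t ^ 2 / 8) := by
  rw [sum_exp_indicator]
  set q : ℝ := ((s.filter pr).card : ℝ) with hq
  set N : ℝ := (s.card : ℝ) with hNd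
  have hNpos : (0:ℝ) < N := by rw [hNd]; exact_mod_cast hN
  have hqc : ((s.filter (fun f => ¬ pr f)).card : ℝ) = N - q := by
    have := Finset.card_filter_add_card_filter_not (s := s) (p := pr)
    rw [hq, hNd]
    push_cast [← this]
    ring
  rw [hqc]
  have hp0 : 0 ≤ q / N := by positivity
  have hp1 : q / N ≤ 1 := by
    rw [div_le_one hNpos, hq, hNd]
    exact_mod_cast Finset.card_filter_le s pr
  have := hoeffding_scalar hp0 hp1 t
  have h2 := mul_le_mul_of_nonneg_left this hNpos.le
  calc q * Real.exp t + (N - q)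
      = N * ((1 - q / N) + q / N * Real.exp t) := by field_simp; ring
    _ ≤ N * Real.exp (t * (q / N) + t ^ 2 / 8) := h2

end SCFAux

namespace SCFAux

open Finset

variable {V : Type*} [Fintype V] [DecidableEq V]

lemma main_thm (E : V → V → Prop) [DecidableRel E] (hE : ∀ i, ¬ E i i)
    (i j : V) (hij : i ≠ j)
    (l : ℕ) (ε δ : ℝ) (hε : 0 < ε ∧ ε < 1) (hδ : 0 < δ ∧ δ < 1)
    (hl : (1 / (2 * ε ^ 2) + 2 / (3 * ε)) * Real.log (2 / δ) /
        (2 + (outDeg E j : ℝ)) ^ 2 ≤ (l : ℝ)) :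
    (1 - δ) *
        ((Finset.univ.filter
            (fun φ : Fin l → (V → Option V) => ∀ k, φ k ∈ forests E)).card : ℝ)
      ≤ ((Finset.univ.filter
            (fun φ : Fin l → (V → Option V) => (∀ k, φ k ∈ forests E) ∧
              |(1 / (l : ℝ)) * (∑ k, (1 / (2 + (outDeg E j : ℝ))) *
                  (indEst i j (φ k) + ∑ c ∈ inNbrs E j, indEst i c (φ k))) -
                fOmega E i j| ≤ ε)).card : ℝ) := by
  classical
  obtain ⟨hε0, hε1⟩ := hε
  obtain ⟨hδ0, hδ1⟩ := hδ
  set d : ℝ := (outDeg E j : ℝ) with hd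
  have hd0 : (0:ℝ) ≤ d := by rw [hd]; positivity
  have h2d : (0:ℝ) < 2 + d := by linarith
  have hL : 0 < Real.log (2 / δ) := Real.log_pos (by rw [lt_div_iff₀ hδ0]; linarith)
  have hlpos : (0:ℝ) < (l : ℝ) :=
    lt_of_lt_of_le (by positivity) hl
  have hlne : (l:ℝ) ≠ 0 := hlpos.ne'
  set T : Finset V := insert j (inNbrs E j) with hT
  set Z : (V → Option V) → ℝ := fun f => if rootOf f i ∈ T then (1:ℝ) else 0 with hZ
  set N : ℝ := ((forests E).card : ℝ) with hN
  have hNpos : (0:ℝ) < N := by rw [hN]; exact_mod_cast forests_nonempty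
  set q : ℝ := (((forests E).filter (fun f => rootOf f i ∈ T)).card : ℝ) with hq
  set p : ℝ := q / N with hp
  set e : ℝ := ε * (2 + d) with he
  have hepos : 0 < e := by rw [he]; positivity
  have hjS : j ∉ inNbrs E j := by simp [inNbrs, hE j]
  -- pointwise estimator identity
  have hest : ∀ f : V → Option V,
      indEst i j f + ∑ c ∈ inNbrs E j, indEst i c f = Z f := by
    intro f
    simp only [indEst, hZ]
    rw [Finset.sum_ite_eq (inNbrs E j) (rootOf f i) (fun _ => (1:ℝ))]
    by_cases h1 : rootOf f i = j
    · simp [hT, h1, hjS]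
    · by_cases h2 : rootOf f i ∈ inNbrs E j <;> simp [hT, h1, h2]
  -- unbiasedness
  have hinNbrs : Finset.univ.filter (fun k => E k j) = inNbrs E j := rfl
  have hFij : ∀ a b : V, Fij E a b = (forests E).filter (fun f => rootOf f a = b) := fun _ _ => rfl
  have hsplitq : ((forests E).filter (fun f => rootOf f i ∈ T)).card
      = (Fij E i j).card + ∑ k ∈ inNbrs E j, (Fij E i k).card := by
    rw [Finset.card_filter]
    have h1 : ∀ f ∈ forests E, (if rootOf f i ∈ T then (1:ℕ) else 0) =
        (if rootOf f i = j then 1 else 0)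
          + ∑ k ∈ inNbrs E j, (if rootOf f i = k then 1 else 0) := by
      intro f _
      rw [Finset.sum_ite_eq (inNbrs E j) (rootOf f i) (fun _ => (1:ℕ))]
      by_cases h1 : rootOf f i = j
      · simp [hT, h1, hjS]
      · by_cases h2 : rootOf f i ∈ inNbrs E j <;> simp [hT, h1, h2]
    rw [Finset.sum_congr rfl h1, Finset.sum_add_distrib]
    congr 1
    · rw [hFij, Finset.card_filter]
    · rw [Finset.sum_comm]
      exact Finset.sum_congr rfl (fun k _ => by rw [hFij, Finset.card_filter])
  have hkey := key_col (E := E) hE (i := i) (j := j) hij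
  rw [hinNbrs] at hkey
  have hqreal : q = ((Fij E i j).card : ℝ) + ∑ k ∈ inNbrs E j, ((Fij E i k).card : ℝ) := by
    rw [hq, hsplitq]; push_cast; ring
  have hqid : q = (2 + d) * ((Fij E i j).card : ℝ) := by
    rw [hqreal, ← hkey]; rw [hd]; ring
  have hcardFij : ((Fij E i j).card : ℝ) = q / (2 + d) := by
    rw [hqid]; field_simp
  have homega : fOmega E i j = (1 / (2 + d)) * p := by
    have h0 : fOmega E i j = ((Fij E i j).card : ℝ) / N := rfl
    rw [h0, hcardFij, hp]
    field_simp
  -- rewrite of the sample average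
  have hxbar : ∀ φ : Fin l → (V → Option V),
      (1 / (l : ℝ)) * (∑ k, (1 / (2 + d)) *
          (indEst i j (φ k) + ∑ c ∈ inNbrs E j, indEst i c (φ k))) - fOmega E i j
        = (1 / ((2 + d) * (l:ℝ))) * ((∑ k, Z (φ k)) - (l:ℝ) * p) := by
    intro φ
    simp only [hest]
    rw [homega, ← Finset.mul_sum]
    field_simp
  -- the mgf bound
  have hmgf : ∀ t : ℝ, ∑ f ∈ forests E, Real.exp (t * Z f)
      ≤ N * Real.exp (t * p + t ^ 2 / 8) := by
    intro t
    have := indicator_mgf_bound (forests E) (fun f => rootOf f i ∈ T) forests_nonempty t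
    simpa [hZ, hN, hq, hp] using this
  have hsum_nonneg : ∀ t : ℝ, (0:ℝ) ≤ ∑ f ∈ forests E, Real.exp (t * Z f) :=
    fun t => Finset.sum_nonneg (fun f _ => (Real.exp_pos _).le)
  have hcollect : ∀ t a : ℝ,
      Real.exp (-(t * a)) * (N * Real.exp (t * p + t ^ 2 / 8)) ^ l
        = N ^ l * Real.exp ((l:ℝ) * (t * p + t ^ 2 / 8) - t * a) := by
    intro t a
    calc Real.exp (-(t * a)) * (N * Real.exp (t * p + t ^ 2 / 8)) ^ l
        = N ^ l * (Real.exp (-(t * a)) * Real.exp ((l:ℝ) * (t * p + t ^ 2 / 8))) := by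
          rw [mul_pow, ← Real.exp_nat_mul]; ring
      _ = N ^ l * Real.exp ((l:ℝ) * (t * p + t ^ 2 / 8) - t * a) := by
          rw [← Real.exp_add]; ring_nf
  -- upper tail
  have hUp : (((Fintype.piFinset (fun _ : Fin l => forests E)).filter
      (fun φ => (l:ℝ) * p + (l:ℝ) * e ≤ ∑ k, Z (φ k))).card : ℝ)
      ≤ N ^ l * Real.exp (-(2 * (l:ℝ) * e ^ 2)) := by
    have hcc := chernoff_count (forests E) Z l (4 * e) ((l:ℝ) * p + (l:ℝ) * e)
      (fun φ => (l:ℝ) * p + (l:ℝ) * e ≤ ∑ k, Z (φ k))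
      (fun φ hφ => mul_le_mul_of_nonneg_left hφ (by positivity))
    refine hcc.trans ?_
    have h5 : (∑ f ∈ forests E, Real.exp (4 * e * Z f)) ^ l
        ≤ (N * Real.exp (4 * e * p + (4 * e) ^ 2 / 8)) ^ l :=
      pow_le_pow_left₀ (hsum_nonneg _) (hmgf (4 * e)) l
    calc Real.exp (-(4 * e * ((l:ℝ) * p + (l:ℝ) * e)))
          * (∑ f ∈ forests E, Real.exp (4 * e * Z f)) ^ l
        ≤ Real.exp (-(4 * e * ((l:ℝ) * p + (l:ℝ) * e)))
          * (N * Real.exp (4 * e * p + (4 * e) ^ 2 / 8)) ^ l :=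
          mul_le_mul_of_nonneg_left h5 (Real.exp_pos _).le
      _ = N ^ l * Real.exp ((l:ℝ) * (4 * e * p + (4 * e) ^ 2 / 8)
            - 4 * e * ((l:ℝ) * p + (l:ℝ) * e)) := hcollect _ _
      _ = N ^ l * Real.exp (-(2 * (l:ℝ) * e ^ 2)) := by
          congr 1; congr 1; ring
  -- lower tail
  have hLow : (((Fintype.piFinset (fun _ : Fin l => forests E)).filter
      (fun φ => ∑ k, Z (φ k) ≤ (l:ℝ) * p - (l:ℝ) * e)).card : ℝ)
      ≤ N ^ l * Real.exp (-(2 * (l:ℝ) * e ^ 2)) := by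
    have hcc := chernoff_count (forests E) Z l (-(4 * e)) ((l:ℝ) * p - (l:ℝ) * e)
      (fun φ => ∑ k, Z (φ k) ≤ (l:ℝ) * p - (l:ℝ) * e)
      (fun φ hφ => mul_le_mul_of_nonpos_left hφ (by nlinarith))
    refine hcc.trans ?_
    have h5 : (∑ f ∈ forests E, Real.exp (-(4 * e) * Z f)) ^ l
        ≤ (N * Real.exp (-(4 * e) * p + (-(4 * e)) ^ 2 / 8)) ^ l :=
      pow_le_pow_left₀ (hsum_nonneg _) (hmgf (-(4 * e))) l
    calc Real.exp (-(-(4 * e) * ((l:ℝ) * p - (l:ℝ) * e)))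
          * (∑ f ∈ forests E, Real.exp (-(4 * e) * Z f)) ^ l
        ≤ Real.exp (-(-(4 * e) * ((l:ℝ) * p - (l:ℝ) * e)))
          * (N * Real.exp (-(4 * e) * p + (-(4 * e)) ^ 2 / 8)) ^ l :=
          mul_le_mul_of_nonneg_left h5 (Real.exp_pos _).le
      _ = N ^ l * Real.exp ((l:ℝ) * (-(4 * e) * p + (-(4 * e)) ^ 2 / 8)
            - -(4 * e) * ((l:ℝ) * p - (l:ℝ) * e)) := hcollect _ _
      _ = N ^ l * Real.exp (-(2 * (l:ℝ) * e ^ 2)) := by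
          congr 1; congr 1; ring
  -- the exponential is small
  have hexp : Real.exp (-(2 * (l:ℝ) * e ^ 2)) ≤ δ / 2 := by
    have hkey2 : Real.log (2 / δ) ≤ 2 * (l:ℝ) * e ^ 2 := by
      have h1 : 1 / (2 * ε ^ 2) * Real.log (2 / δ) / (2 + d) ^ 2 ≤ (l:ℝ) := by
        refine le_trans ?_ hl
        gcongr
        · exact le_add_of_nonneg_right (by positivity)
      rw [div_le_iff₀ (by positivity : (0:ℝ) < (2 + d) ^ 2)] at h1
      have h2 : Real.log (2 / δ) ≤ (l:ℝ) * (2 + d) ^ 2 * (2 * ε ^ 2) := by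
        rw [div_mul_eq_mul_div, div_le_iff₀ (by positivity : (0:ℝ) < 2 * ε ^ 2)] at h1
        linarith
      calc Real.log (2 / δ) ≤ (l:ℝ) * (2 + d) ^ 2 * (2 * ε ^ 2) := h2
        _ = 2 * (l:ℝ) * e ^ 2 := by rw [he]; ring
    rw [show δ / 2 = Real.exp (Real.log (δ / 2)) from (Real.exp_log (by linarith)).symm]
    apply Real.exp_le_exp.mpr
    have hlogeq : Real.log (δ / 2) = - Real.log (2 / δ) := by
      rw [← Real.log_inv]
      congr 1
      rw [inv_div]
    rw [hlogeq]
    linarith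
  -- identify the filters
  set Afin := Fintype.piFinset (fun _ : Fin l => forests E) with hAfin
  have hAuniv : (Finset.univ.filter
      (fun φ : Fin l → (V → Option V) => ∀ k, φ k ∈ forests E)) = Afin := by
    ext φ; simp [hAfin, Fintype.mem_piFinset]
  have hAcard : (Afin.card : ℝ) = N ^ l := by
    rw [hAfin, Fintype.card_piFinset]
    simp [hN]
  set P : (Fin l → (V → Option V)) → Prop := fun φ =>
    |(1 / (l : ℝ)) * (∑ k, (1 / (2 + d)) *
        (indEst i j (φ k) + ∑ c ∈ inNbrs E j, indEst i c (φ k))) - fOmega E i j| ≤ ε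
    with hP
  have hBeq : (Finset.univ.filter
      (fun φ : Fin l → (V → Option V) => (∀ k, φ k ∈ forests E) ∧ P φ)) = Afin.filter P := by
    ext φ
    simp only [mem_filter, mem_univ, true_and, hAfin, Fintype.mem_piFinset]
  rw [hAuniv, hBeq]
  -- split the complement
  have hsplit : Afin \ (Afin.filter P) ⊆
      (Afin.filter (fun φ => (l:ℝ) * p + (l:ℝ) * e ≤ ∑ k, Z (φ k))) ∪
      (Afin.filter (fun φ => ∑ k, Z (φ k) ≤ (l:ℝ) * p - (l:ℝ) * e)) := by
    intro φ hφ
    rw [Finset.mem_sdiff, Finset.mem_filter] at hφ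
    obtain ⟨hφA, hnP⟩ := hφ
    have hnP' : ¬ P φ := fun h => hnP ⟨hφA, h⟩
    simp only [hP] at hnP'
    push_neg at hnP'
    rw [hxbar φ] at hnP'
    have hc : (0:ℝ) < 1 / ((2 + d) * (l:ℝ)) := by positivity
    rw [abs_mul, abs_of_pos hc] at hnP'
    have hnP'' : ε * ((2 + d) * (l:ℝ)) < |(∑ k, Z (φ k)) - (l:ℝ) * p| := by
      rw [show (1 / ((2 + d) * (l:ℝ))) * |(∑ k, Z (φ k)) - (l:ℝ) * p|
          = |(∑ k, Z (φ k)) - (l:ℝ) * p| / ((2 + d) * (l:ℝ)) by ring] at hnP'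
      exact (lt_div_iff₀ (by positivity)).mp hnP'
    have habs : (l:ℝ) * e < |(∑ k, Z (φ k)) - (l:ℝ) * p| := by
      calc (l:ℝ) * e = ε * ((2 + d) * (l:ℝ)) := by rw [he]; ring
        _ < _ := hnP''
    rw [Finset.mem_union, Finset.mem_filter, Finset.mem_filter]
    rcases lt_abs.mp habs with h | h
    · exact Or.inl ⟨hφA, by linarith⟩
    · exact Or.inr ⟨hφA, by linarith⟩
  -- final counting
  have hc1 : (Afin \ (Afin.filter P)).card ≤
      ((Afin.filter (fun φ => (l:ℝ) * p + (l:ℝ) * e ≤ ∑ k, Z (φ k))).card +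
       (Afin.filter (fun φ => ∑ k, Z (φ k) ≤ (l:ℝ) * p - (l:ℝ) * e)).card) :=
    le_trans (Finset.card_le_card hsplit) (Finset.card_union_le _ _)
  have hc2 : (Afin \ (Afin.filter P)).card = Afin.card - (Afin.filter P).card :=
    Finset.card_sdiff_of_subset (Finset.filter_subset _ _)
  have hc3 : (Afin.filter P).card ≤ Afin.card := Finset.card_filter_le _ _
  have hc4 : (Afin.card : ℝ) - ((Afin.filter P).card : ℝ)
      ≤ 2 * (N ^ l * Real.exp (-(2 * (l:ℝ) * e ^ 2))) := by
    have := hc1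
    rw [hc2] at this
    have hcast : (Afin.card : ℝ) - ((Afin.filter P).card : ℝ)
        = ((Afin.card - (Afin.filter P).card : ℕ) : ℝ) := by
      rw [Nat.cast_sub hc3]
    rw [hcast]
    calc ((Afin.card - (Afin.filter P).card : ℕ) : ℝ)
        ≤ (((Afin.filter (fun φ => (l:ℝ) * p + (l:ℝ) * e ≤ ∑ k, Z (φ k))).card +
           (Afin.filter (fun φ => ∑ k, Z (φ k) ≤ (l:ℝ) * p - (l:ℝ) * e)).card : ℕ) : ℝ) := by
          exact_mod_cast this
      _ ≤ N ^ l * Real.exp (-(2 * (l:ℝ) * e ^ 2))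
          + N ^ l * Real.exp (-(2 * (l:ℝ) * e ^ 2)) := by
          push_cast
          exact add_le_add hUp hLow
      _ = 2 * (N ^ l * Real.exp (-(2 * (l:ℝ) * e ^ 2))) := by ring
  have hNl : (0:ℝ) ≤ N ^ l := pow_nonneg hNpos.le l
  have hfinal : 2 * (N ^ l * Real.exp (-(2 * (l:ℝ) * e ^ 2))) ≤ δ * N ^ l := by
    calc 2 * (N ^ l * Real.exp (-(2 * (l:ℝ) * e ^ 2)))
        ≤ 2 * (N ^ l * (δ / 2)) := by
          apply mul_le_mul_of_nonneg_left _ (by norm_num)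
          exact mul_le_mul_of_nonneg_left hexp hNl
      _ = δ * N ^ l := by ring
  rw [hAcard]
  linarith
end SCFAux


open scoped Classical in
/-- for distinct i ≠ j and l independent uniform spanning
converging forests, the averaged combined estimator
x̄ = (1/l)·Σ_k ω̄_ij(φ_k), with
ω̄_ij(φ) = (1/(2+d_j))·(1_{r_φ(i)=j} + Σ_{k∈N⁻(j)} 1_{r_φ(i)=k}), satisfies
|x̄ − ω_ij| ≤ ε with probability at least 1 − δ, provided
l ≥ (1/(2ε²) + 2/(3ε))·log(2/δ)/(2+d_j)². -/
theorem combinedEst_concentration {V : Type*} [Fintype V] [DecidableEq V]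
    (E : V → V → Prop) [DecidableRel E] (hE : ∀ i, ¬ E i i)
    (i j : V) (hij : i ≠ j)
    (l : ℕ) (ε δ : ℝ) (hε : 0 < ε ∧ ε < 1) (hδ : 0 < δ ∧ δ < 1)
    (hl : (1 / (2 * ε ^ 2) + 2 / (3 * ε)) * Real.log (2 / δ) /
        (2 + (outDeg E j : ℝ)) ^ 2 ≤ (l : ℝ)) :
    (1 - δ) *
        ((Finset.univ.filter
            (fun φ : Fin l → (V → Option V) => ∀ k, φ k ∈ forests E)).card : ℝ)
      ≤ ((Finset.univ.filter
            (fun φ : Fin l → (V → Option V) => (∀ k, φ k ∈ forests E) ∧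
              |(1 / (l : ℝ)) * (∑ k, (1 / (2 + (outDeg E j : ℝ))) *
                  (indEst i j (φ k) + ∑ c ∈ inNbrs E j, indEst i c (φ k))) -
                fOmega E i j| ≤ ε)).card : ℝ) :=
  SCFAux.main_thm E hE i j hij l ε δ hε hδ hl
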